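/- The S-information decomposes as Σ(X) = n · Σ_{k=1}^{n−1} u_k(X). -/

import Mathlib

set_option maxHeartbeats 1000000

open MeasureTheory Finset

noncomputable section

variable {Ω : Type*} [MeasurableSpace Ω]

/-- Shannon entropy of a finite-valued random variable `Z` under the measure `μ`
(with the convention that the entropy of an empty tuple is `negMulLog (μ univ) = 0`
for a probability measure). -/
def ent {α : Type*} [Fintype α] (μ : Measure Ω) (Z : Ω → α) : ℝ :=
  ∑ z : α, Real.negMulLog ((μ (Z ⁻¹' {z})).toReal)

/-- Conditional entropy `H(A | B)`. -/
def condEnt {α β : Type*} [Fintype α] [Fintype β] (μ : Measure Ω)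
    (A : Ω → α) (B : Ω → β) : ℝ :=
  ent μ (fun ω => (A ω, B ω)) - ent μ B

/-- Mutual information `I(A ; B)`. -/
def mi {α β : Type*} [Fintype α] [Fintype β] (μ : Measure Ω)
    (A : Ω → α) (B : Ω → β) : ℝ :=
  ent μ A + ent μ B - ent μ (fun ω => (A ω, B ω))

/-- Conditional mutual information `I(A ; B | C)`. -/
def cmi {α β γ : Type*} [Fintype α] [Fintype β] [Fintype γ] (μ : Measure Ω)
    (A : Ω → α) (B : Ω → β) (C : Ω → γ) : ℝ :=
  ent μ (fun ω => (A ω, C ω)) + ent μ (fun ω => (B ω, C ω))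
    - ent μ (fun ω => (A ω, B ω, C ω)) - ent μ C

/-- The sub-tuple `X^a = (X_i)_{i ∈ a}` of the random vector `X = (X_1, …, X_n)`. -/
def restr {n : ℕ} {S : Type*} (X : Fin n → Ω → S) (a : Finset (Fin n)) :
    Ω → (a → S) :=
  fun ω i => X i.1 ω

/-- Average subset entropy `r_k(X) = C(n,k)⁻¹ ∑_{|a| = k} H(X^a)`. -/
def rE {n : ℕ} {S : Type*} [Fintype S] (μ : Measure Ω) (X : Fin n → Ω → S) (k : ℕ) : ℝ :=
  ((n.choose k : ℝ))⁻¹ *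
    ∑ a ∈ univ.powerset.filter (fun a : Finset (Fin n) => a.card = k), ent μ (restr X a)

/-- Average conditional pairwise mutual information
`u_k(X) = (C(n,k+1) C(k+1,2))⁻¹ ∑_{i<j} ∑_{|a| = k-1, i,j ∉ a} I(X_i ; X_j | X^a)`. -/
def uI {n : ℕ} {S : Type*} [Fintype S] (μ : Measure Ω) (X : Fin n → Ω → S) (k : ℕ) : ℝ :=
  ((n.choose (k + 1) : ℝ) * ((k + 1).choose 2 : ℝ))⁻¹ *
    ∑ p ∈ univ.filter (fun p : Fin n × Fin n => p.1 < p.2),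
      ∑ a ∈ (univ \ ({p.1, p.2} : Finset (Fin n))).powerset.filter
          (fun a : Finset (Fin n) => a.card = k - 1),
        cmi μ (X p.1) (X p.2) (restr X a)

/-! ### Auxiliary combinatorial lemmas -/

lemma two_mul_choose_two' : ∀ m : ℕ, 2 * m.choose 2 = m * (m - 1)
  | 0 => rfl
  | (m+1) => by
      rw [Nat.choose_succ_succ, Nat.mul_add, two_mul_choose_two' m, Nat.choose_one_right,
        Nat.add_sub_cancel]
      cases m with
      | zero => rfl
      | succ t => simp only [Nat.succ_sub_one]; ring

lemma card_filter_lt' {α : Type*} [Fintype α] [LinearOrder α] (s : Finset α) :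
    ((s ×ˢ s).filter (fun p => p.1 < p.2)).card = s.card.choose 2 := by
  classical
  have hswap : ((s ×ˢ s).filter (fun p => p.2 < p.1)).card
      = ((s ×ˢ s).filter (fun p => p.1 < p.2)).card := by
    apply Finset.card_nbij' Prod.swap Prod.swap <;>
      simp [Set.MapsTo, Set.LeftInvOn, Set.RightInvOn, Finset.mem_filter, Finset.mem_product, and_comm]
  have hunion : (s ×ˢ s).filter (fun p => p.1 < p.2) ∪ (s ×ˢ s).filter (fun p => p.2 < p.1)
      = s.offDiag := by
    ext p
    simp only [Finset.mem_union, Finset.mem_filter, Finset.mem_product, Finset.mem_offDiag]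
    constructor
    · rintro (⟨⟨h1, h2⟩, h⟩ | ⟨⟨h1, h2⟩, h⟩)
      · exact ⟨h1, h2, ne_of_lt h⟩
      · exact ⟨h1, h2, ne_of_gt h⟩
    · rintro ⟨h1, h2, h⟩
      rcases lt_or_gt_of_ne h with h' | h'
      · exact Or.inl ⟨⟨h1, h2⟩, h'⟩
      · exact Or.inr ⟨⟨h1, h2⟩, h'⟩
  have hdisj : Disjoint ((s ×ˢ s).filter (fun p => p.1 < p.2))
      ((s ×ˢ s).filter (fun p => p.2 < p.1)) := by
    rw [Finset.disjoint_left]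
    intro p hp hp'
    simp only [Finset.mem_filter] at hp hp'
    exact absurd hp'.2 (lt_asymm hp.2)
  have hcard := Finset.card_union_of_disjoint hdisj
  rw [hunion, hswap, Finset.offDiag_card] at hcard
  have h2 := two_mul_choose_two' s.card
  have h3 : s.card * (s.card - 1) = s.card * s.card - s.card := by
    cases s.card with
    | zero => rfl
    | succ t => simp only [Nat.succ_sub_one]; ring_nf; omega
  omega

lemma natid1' (n m : ℕ) :
    (m+1) * (n - (m+1)) * n.choose (m+1) = 2 * (n.choose (m+2) * (m+2).choose 2) := by
  have h1 : 2 * (m+2).choose 2 = (m+2) * (m+1) := by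
    rw [two_mul_choose_two']
    rfl
  have h2 : n.choose (m+2) * (m+2) = n.choose (m+1) * (n - (m+1)) :=
    Nat.choose_succ_right_eq n (m+1)
  calc (m+1) * (n - (m+1)) * n.choose (m+1)
      = (n.choose (m+1) * (n - (m+1))) * (m+1) := by ring
    _ = (n.choose (m+2) * (m+2)) * (m+1) := by rw [h2]
    _ = n.choose (m+2) * ((m+2) * (m+1)) := by ring
    _ = n.choose (m+2) * (2 * (m+2).choose 2) := by rw [h1]
    _ = 2 * (n.choose (m+2) * (m+2).choose 2) := by ring

lemma natid3' (n m : ℕ) :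
    (n - m).choose 2 * n.choose m = n.choose (m+2) * (m+2).choose 2 := by
  apply Nat.eq_of_mul_eq_mul_left (show 0 < 2 by norm_num)
  have h1 : 2 * (n - m).choose 2 = (n - m) * (n - (m+1)) := by
    rw [two_mul_choose_two', Nat.sub_sub]
  have h2 : n.choose (m+1) * (m+1) = n.choose m * (n - m) :=
    Nat.choose_succ_right_eq n m
  calc 2 * ((n - m).choose 2 * n.choose m)
      = (2 * (n - m).choose 2) * n.choose m := by ring
    _ = (n - m) * (n - (m+1)) * n.choose m := by rw [h1]
    _ = (n.choose m * (n - m)) * (n - (m+1)) := by ring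
    _ = (n.choose (m+1) * (m+1)) * (n - (m+1)) := by rw [h2]
    _ = (m+1) * (n - (m+1)) * n.choose (m+1) := by ring
    _ = 2 * (n.choose (m+2) * (m+2).choose 2) := natid1' n m

/-! ### Index sets -/

def Pset (n : ℕ) : Finset (Fin n × Fin n) :=
  Finset.univ.filter (fun p : Fin n × Fin n => p.1 < p.2)

def Aset {n : ℕ} (p : Fin n × Fin n) (m : ℕ) : Finset (Finset (Fin n)) :=
  ((Finset.univ \ ({p.1, p.2} : Finset (Fin n))).powerset).filter
    (fun a : Finset (Fin n) => a.card = m)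

def Fset (n m : ℕ) : Finset (Finset (Fin n)) :=
  (Finset.univ.powerset).filter (fun a : Finset (Fin n) => a.card = m)

lemma mem_Pset {n : ℕ} {p : Fin n × Fin n} : p ∈ Pset n ↔ p.1 < p.2 := by
  simp [Pset]

lemma mem_Aset {n : ℕ} {p : Fin n × Fin n} {m : ℕ} {a : Finset (Fin n)} :
    a ∈ Aset p m ↔ p.1 ∉ a ∧ p.2 ∉ a ∧ a.card = m := by
  simp only [Aset, Finset.mem_filter, Finset.mem_powerset, Finset.subset_sdiff,
    Finset.subset_univ, true_and, Finset.disjoint_insert_right, Finset.disjoint_singleton_right,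
    and_assoc]

lemma mem_Fset {n m : ℕ} {a : Finset (Fin n)} : a ∈ Fset n m ↔ a.card = m := by
  simp [Fset]

lemma sumL3 {n : ℕ} (m : ℕ) (g : Finset (Fin n) → ℝ) :
    ∑ p ∈ Pset n, ∑ a ∈ Aset p m, g a
      = (((n - m).choose 2 : ℕ) : ℝ) * ∑ a ∈ Fset n m, g a := by
  have h1 : ∀ p ∈ Pset n, ∑ a ∈ Aset p m, g a
      = ∑ a ∈ Fset n m, if p.1 ∉ a ∧ p.2 ∉ a then g a else 0 := by
    intro p _
    have hA : Aset p m = (Fset n m).filter (fun a => p.1 ∉ a ∧ p.2 ∉ a) := by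
      ext a
      simp only [mem_Aset, Finset.mem_filter, mem_Fset]
      tauto
    rw [hA, Finset.sum_filter]
  rw [Finset.sum_congr rfl h1, Finset.sum_comm, Finset.mul_sum]
  refine Finset.sum_congr rfl fun a ha => ?_
  rw [← Finset.sum_filter, Finset.sum_const, nsmul_eq_mul]
  congr 2
  have h2 : (Pset n).filter (fun p => p.1 ∉ a ∧ p.2 ∉ a)
      = (aᶜ ×ˢ aᶜ).filter (fun p => p.1 < p.2) := by
    ext p
    simp only [Finset.mem_filter, mem_Pset, Finset.mem_product, Finset.mem_compl]
    tauto
  rw [h2, card_filter_lt', Finset.card_compl, Fintype.card_fin, mem_Fset.1 ha]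

lemma sumL2 {n : ℕ} (m : ℕ) (g : Finset (Fin n) → ℝ) :
    ∑ p ∈ Pset n, ∑ a ∈ Aset p m, g (insert p.1 (insert p.2 a))
      = (((m + 2).choose 2 : ℕ) : ℝ) * ∑ c ∈ Fset n (m + 2), g c := by
  have hrhs : (((m + 2).choose 2 : ℕ) : ℝ) * ∑ c ∈ Fset n (m + 2), g c
      = ∑ y ∈ (Fset n (m + 2)).sigma (fun c => (c ×ˢ c).filter (fun q => q.1 < q.2)),
          g y.1 := by
    rw [Finset.sum_sigma, Finset.mul_sum]
    refine Finset.sum_congr rfl fun c hc => ?_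
    dsimp only
    rw [Finset.sum_const, nsmul_eq_mul, card_filter_lt', mem_Fset.1 hc]
  rw [Finset.sum_sigma' (Pset n) (fun p => Aset p m)
    (fun p a => g (insert p.1 (insert p.2 a))), hrhs]
  apply Finset.sum_nbij' (i := fun x : (_ : Fin n × Fin n) × Finset (Fin n) =>
      (⟨insert x.1.1 (insert x.1.2 x.2), x.1⟩ : (_ : Finset (Fin n)) × (Fin n × Fin n)))
    (j := fun y : (_ : Finset (Fin n)) × (Fin n × Fin n) =>
      (⟨(y.2.1, y.2.2), (y.1.erase y.2.1).erase y.2.2⟩ : (_ : Fin n × Fin n) × Finset (Fin n)))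
  · rintro ⟨p, a⟩ hx
    rw [Finset.mem_sigma, mem_Pset, mem_Aset] at hx
    obtain ⟨hlt, h1, h2, hcard⟩ := hx
    rw [Finset.mem_sigma, mem_Fset]
    constructor
    · rw [Finset.card_insert_of_notMem (by simp [h1, ne_of_lt hlt]),
        Finset.card_insert_of_notMem h2, hcard]
    · simp only [Finset.mem_filter, Finset.mem_product]
      exact ⟨⟨Finset.mem_insert_self _ _,
        Finset.mem_insert_of_mem (Finset.mem_insert_self _ _)⟩, hlt⟩
  · rintro ⟨c, q⟩ hy
    rw [Finset.mem_sigma, mem_Fset] at hy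
    obtain ⟨hcard, hq⟩ := hy
    dsimp only at hcard
    simp only [Finset.mem_filter, Finset.mem_product] at hq
    obtain ⟨⟨hq1, hq2⟩, hlt⟩ := hq
    rw [Finset.mem_sigma, mem_Pset, mem_Aset]
    refine ⟨hlt, ?_, ?_, ?_⟩
    · simp [Finset.mem_erase]
    · simp [Finset.mem_erase]
    · rw [Finset.card_erase_of_mem (Finset.mem_erase.2 ⟨ne_of_gt hlt, hq2⟩),
        Finset.card_erase_of_mem hq1]
      omega
  · rintro ⟨p, a⟩ hx
    rw [Finset.mem_sigma, mem_Pset, mem_Aset] at hx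
    obtain ⟨hlt, h1, h2, hcard⟩ := hx
    have : ((insert p.1 (insert p.2 a)).erase p.1).erase p.2 = a := by
      rw [Finset.erase_insert (by simp [h1, ne_of_lt hlt]), Finset.erase_insert h2]
    simp only [this]
  · rintro ⟨c, q⟩ hy
    rw [Finset.mem_sigma, mem_Fset] at hy
    obtain ⟨hcard, hq⟩ := hy
    dsimp only at hcard
    simp only [Finset.mem_filter, Finset.mem_product] at hq
    obtain ⟨⟨hq1, hq2⟩, hlt⟩ := hq
    have : insert q.1 (insert q.2 ((c.erase q.1).erase q.2)) = c := by
      rw [Finset.insert_erase (Finset.mem_erase.2 ⟨ne_of_gt hlt, hq2⟩),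
        Finset.insert_erase hq1]
    simp only [this]
  · rintro ⟨p, a⟩ _
    rfl

lemma sumL1 {n : ℕ} (m : ℕ) (g : Finset (Fin n) → ℝ) :
    ∑ p ∈ Pset n, ∑ a ∈ Aset p m, (g (insert p.1 a) + g (insert p.2 a))
      = (((m + 1) * (n - (m + 1)) : ℕ) : ℝ) * ∑ b ∈ Fset n (m + 1), g b := by
  have hswapA : ∀ p : Fin n × Fin n, Aset p.swap m = Aset p m := by
    intro p
    unfold Aset
    rw [Prod.fst_swap, Prod.snd_swap, Finset.pair_comm]
  have hsymm : ∑ p ∈ Pset n, ∑ a ∈ Aset p m, g (insert p.2 a)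
      = ∑ p ∈ Finset.univ.filter (fun p : Fin n × Fin n => p.2 < p.1),
          ∑ a ∈ Aset p m, g (insert p.1 a) := by
    apply Finset.sum_nbij' (i := Prod.swap) (j := Prod.swap)
    · intro p hp; simp only [mem_Pset] at hp; simp [hp]
    · intro p hp; simp only [Finset.mem_filter] at hp; simp [mem_Pset, hp.2]
    · intro p _; simp
    · intro p _; simp
    · intro p _
      rw [hswapA p]
      rfl
  have hQ : Finset.univ.filter (fun p : Fin n × Fin n => p.1 ≠ p.2)
      = Pset n ∪ Finset.univ.filter (fun p : Fin n × Fin n => p.2 < p.1) := by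
    ext p
    simp only [Finset.mem_filter, Finset.mem_univ, true_and, Finset.mem_union, mem_Pset]
    constructor
    · intro h; exact lt_or_gt_of_ne h
    · rintro (h | h)
      · exact ne_of_lt h
      · exact ne_of_gt h
  have hdisj : Disjoint (Pset n)
      (Finset.univ.filter (fun p : Fin n × Fin n => p.2 < p.1)) := by
    rw [Finset.disjoint_left]
    intro p hp hp'
    rw [mem_Pset] at hp
    simp only [Finset.mem_filter] at hp'
    exact absurd hp'.2 (lt_asymm hp)
  have key : ∑ p ∈ Finset.univ.filter (fun p : Fin n × Fin n => p.1 ≠ p.2),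
        ∑ a ∈ Aset p m, g (insert p.1 a)
      = ∑ p ∈ Pset n, ∑ a ∈ Aset p m, (g (insert p.1 a) + g (insert p.2 a)) := by
    rw [hQ, Finset.sum_union hdisj, ← hsymm, ← Finset.sum_add_distrib]
    exact Finset.sum_congr rfl fun p _ => by rw [Finset.sum_add_distrib]
  rw [← key]
  have hrhs : (((m + 1) * (n - (m + 1)) : ℕ) : ℝ) * ∑ b ∈ Fset n (m + 1), g b
      = ∑ y ∈ (Fset n (m + 1)).sigma (fun b => b ×ˢ bᶜ), g y.1 := by
    rw [Finset.sum_sigma, Finset.mul_sum]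
    refine Finset.sum_congr rfl fun b hb => ?_
    dsimp only
    rw [Finset.sum_const, nsmul_eq_mul, Finset.card_product, Finset.card_compl,
      Fintype.card_fin, mem_Fset.1 hb]
  rw [Finset.sum_sigma' _ (fun p => Aset p m) (fun p a => g (insert p.1 a)), hrhs]
  apply Finset.sum_nbij' (i := fun x : (_ : Fin n × Fin n) × Finset (Fin n) =>
      (⟨insert x.1.1 x.2, (x.1.1, x.1.2)⟩ : (_ : Finset (Fin n)) × (Fin n × Fin n)))
    (j := fun y : (_ : Finset (Fin n)) × (Fin n × Fin n) =>
      (⟨(y.2.1, y.2.2), y.1.erase y.2.1⟩ : (_ : Fin n × Fin n) × Finset (Fin n)))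
  · rintro ⟨p, a⟩ hx
    rw [Finset.mem_sigma, mem_Aset] at hx
    simp only [Finset.mem_filter, Finset.mem_univ, true_and] at hx
    obtain ⟨hne, h1, h2, hcard⟩ := hx
    rw [Finset.mem_sigma, mem_Fset]
    constructor
    · rw [Finset.card_insert_of_notMem h1, hcard]
    · rw [Finset.mem_product, Finset.mem_compl]
      refine ⟨Finset.mem_insert_self _ _, ?_⟩
      simp only [Finset.mem_insert]
      push_neg
      exact ⟨Ne.symm hne, h2⟩
  · rintro ⟨b, q⟩ hy
    rw [Finset.mem_sigma, mem_Fset] at hy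
    obtain ⟨hcard, hq⟩ := hy
    dsimp only at hcard
    simp only [Finset.mem_product, Finset.mem_compl] at hq
    obtain ⟨hq1, hq2⟩ := hq
    rw [Finset.mem_sigma, mem_Aset]
    simp only [Finset.mem_filter, Finset.mem_univ, true_and]
    refine ⟨fun h => hq2 (h ▸ hq1), ?_, ?_, ?_⟩
    · simp [Finset.mem_erase]
    · intro h
      exact hq2 (Finset.mem_of_mem_erase h)
    · rw [Finset.card_erase_of_mem hq1]
      omega
  · rintro ⟨p, a⟩ hx
    rw [Finset.mem_sigma, mem_Aset] at hx
    obtain ⟨_, h1, h2, hcard⟩ := hx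
    have : (insert p.1 a).erase p.1 = a := Finset.erase_insert h1
    simp only [this]
  · rintro ⟨b, q⟩ hy
    rw [Finset.mem_sigma, mem_Fset] at hy
    obtain ⟨hcard, hq⟩ := hy
    simp only [Finset.mem_product, Finset.mem_compl] at hq
    have : insert q.1 (b.erase q.1) = b := Finset.insert_erase hq.1
    simp only [this]
  · rintro ⟨p, a⟩ _
    rfl

/-! ### Entropy lemmas -/

lemma ent_comp_inj {α β : Type*} [Fintype α] [Fintype β] (μ : Measure Ω) (Z : Ω → α)
    {f : α → β} (hf : Function.Injective f) :
    ent μ (fun ω => f (Z ω)) = ent μ Z := by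
  classical
  unfold ent
  rw [← Finset.sum_subset (Finset.subset_univ (Finset.univ.image f))]
  · rw [Finset.sum_image (fun a _ b _ h => hf h)]
    refine Finset.sum_congr rfl fun a _ => ?_
    have : (fun ω => f (Z ω)) ⁻¹' {f a} = Z ⁻¹' {a} := by
      ext ω; simp [hf.eq_iff]
    rw [this]
  · intro b _ hb
    have : (fun ω => f (Z ω)) ⁻¹' {b} = ∅ := by
      ext ω
      simp only [Set.mem_preimage, Set.mem_singleton_iff, Set.mem_empty_iff_false, iff_false]
      intro h
      exact hb (h ▸ Finset.mem_image_of_mem f (Finset.mem_univ _))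
    rw [this]
    simp [Real.negMulLog]

lemma split_inj {n : ℕ} {S : Type*} (i : Fin n) (a : Finset (Fin n)) :
    Function.Injective (fun (g : { x : Fin n // x ∈ insert i a } → S) =>
      ((g ⟨i, Finset.mem_insert_self i a⟩ : S),
       (fun x : { x : Fin n // x ∈ a } => g ⟨x.1, Finset.mem_insert_of_mem x.2⟩))) := by
  intro g₁ g₂ h
  funext x
  obtain ⟨x, hx⟩ := x
  rcases Finset.mem_insert.1 hx with rfl | hxa
  · exact congrArg Prod.fst h
  · exact congrFun (congrArg Prod.snd h) ⟨x, hxa⟩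

lemma ent_pair {n : ℕ} {S : Type*} [Fintype S] (μ : Measure Ω) (X : Fin n → Ω → S)
    {i : Fin n} (a : Finset (Fin n)) :
    ent μ (fun ω => (X i ω, restr X a ω)) = ent μ (restr X (insert i a)) := by
  have h : (fun ω => (X i ω, restr X a ω))
      = (fun ω => (fun (g : { x : Fin n // x ∈ insert i a } → S) =>
          ((g ⟨i, Finset.mem_insert_self i a⟩ : S),
           (fun x : { x : Fin n // x ∈ a } => g ⟨x.1, Finset.mem_insert_of_mem x.2⟩)))
          (restr X (insert i a) ω)) := by
    funext ω
    rfl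
  rw [h]
  exact ent_comp_inj μ (restr X (insert i a)) (split_inj i a)

lemma ent_single {n : ℕ} {S : Type*} [Fintype S] (μ : Measure Ω) (X : Fin n → Ω → S)
    (j : Fin n) :
    ent μ (restr X ({j} : Finset (Fin n))) = ent μ (X j) := by
  have hinj : Function.Injective
      (fun s : S => (fun _ : { x : Fin n // x ∈ ({j} : Finset (Fin n)) } => s)) := by
    intro s t h
    exact congrFun h ⟨j, Finset.mem_singleton_self j⟩
  have h : restr X ({j} : Finset (Fin n))
      = fun ω => (fun _ : { x : Fin n // x ∈ ({j} : Finset (Fin n)) } => X j ω) := by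
    funext ω x
    obtain ⟨x, hx⟩ := x
    obtain rfl := Finset.mem_singleton.1 hx
    rfl
  rw [h, ent_comp_inj μ (X j) hinj]

lemma cmi_expand {n : ℕ} {S : Type*} [Fintype S] (μ : Measure Ω) (X : Fin n → Ω → S)
    (i j : Fin n) (a : Finset (Fin n)) :
    cmi μ (X i) (X j) (restr X a)
      = ent μ (restr X (insert i a)) + ent μ (restr X (insert j a))
        - ent μ (restr X (insert i (insert j a))) - ent μ (restr X a) := by
  unfold cmi
  rw [ent_pair μ X a, ent_pair μ X a]
  have h1 : ent μ (fun ω => (X i ω, X j ω, restr X a ω))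
      = ent μ (fun ω => (X i ω, restr X (insert j a) ω)) := by
    have hinj : Function.Injective (Prod.map (id : S → S)
        (fun (g : { x : Fin n // x ∈ insert j a } → S) =>
          ((g ⟨j, Finset.mem_insert_self j a⟩ : S),
           (fun x : { x : Fin n // x ∈ a } => g ⟨x.1, Finset.mem_insert_of_mem x.2⟩)))) :=
      Function.Injective.prodMap Function.injective_id (split_inj j a)
    have h2 : (fun ω => (X i ω, X j ω, restr X a ω))
        = fun ω => (Prod.map (id : S → S)
            (fun (g : { x : Fin n // x ∈ insert j a } → S) =>
              ((g ⟨j, Finset.mem_insert_self j a⟩ : S),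
               (fun x : { x : Fin n // x ∈ a } => g ⟨x.1, Finset.mem_insert_of_mem x.2⟩))))
            ((fun ω' => (X i ω', restr X (insert j a) ω')) ω) := by
      funext ω
      rfl
    rw [h2, ent_comp_inj μ (fun ω => (X i ω, restr X (insert j a) ω)) hinj]
  rw [h1, ent_pair μ X (insert j a)]

lemma mi_expand {n : ℕ} {S : Type*} [Fintype S] (μ : Measure Ω) (X : Fin n → Ω → S)
    (j : Fin n) :
    mi μ (X j) (restr X (({j} : Finset (Fin n))ᶜ))
      = ent μ (restr X ({j} : Finset (Fin n))) + ent μ (restr X (({j} : Finset (Fin n))ᶜ))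
        - ent μ (restr X (univ : Finset (Fin n))) := by
  unfold mi
  rw [ent_single μ X j]
  congr 1
  rw [ent_pair μ X (({j} : Finset (Fin n))ᶜ), Finset.insert_compl_self]

/-- `Σ(X) = n ∑_{k=1}^{n-1} u_k(X)`. -/
theorem sinfo_decomposition {Ω S : Type*} [MeasurableSpace Ω]
    [Fintype S] [MeasurableSpace S] [MeasurableSingletonClass S]
    {n : ℕ} (hn : 2 ≤ n) (μ : Measure Ω) [IsProbabilityMeasure μ]
    (X : Fin n → Ω → S) (hX : ∀ i, Measurable (X i)) :
    (∑ j : Fin n, mi μ (X j) (restr X ({j} : Finset (Fin n))ᶜ))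
      = (n : ℝ) * ∑ k ∈ Finset.Icc 1 (n - 1), uI μ X k := by
  classical
  set E : Finset (Fin n) → ℝ := fun b => ent μ (restr X b) with hE
  -- the per-k identity
  have hk : ∀ m : ℕ, m + 2 ≤ n →
      uI μ X (m + 1) = 2 * rE μ X (m + 1) - rE μ X (m + 2) - rE μ X m := by
    intro m hm
    have euI : uI μ X (m + 1)
        = ((n.choose (m + 2) : ℝ) * ((m + 2).choose 2 : ℝ))⁻¹ *
            ∑ p ∈ Pset n, ∑ a ∈ Aset p m, cmi μ (X p.1) (X p.2) (restr X a) := rfl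
    have erE : ∀ k : ℕ, rE μ X k = ((n.choose k : ℝ))⁻¹ * ∑ a ∈ Fset n k, E a := fun _ => rfl
    have hS : ∑ p ∈ Pset n, ∑ a ∈ Aset p m, cmi μ (X p.1) (X p.2) (restr X a)
        = (∑ p ∈ Pset n, ∑ a ∈ Aset p m, (E (insert p.1 a) + E (insert p.2 a)))
          - (∑ p ∈ Pset n, ∑ a ∈ Aset p m, E (insert p.1 (insert p.2 a)))
          - (∑ p ∈ Pset n, ∑ a ∈ Aset p m, E a) := by
      rw [← Finset.sum_sub_distrib, ← Finset.sum_sub_distrib]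
      refine Finset.sum_congr rfl fun p hp => ?_
      rw [← Finset.sum_sub_distrib, ← Finset.sum_sub_distrib]
      exact Finset.sum_congr rfl fun a ha => cmi_expand μ X p.1 p.2 a
    rw [euI, hS, sumL1 m E, sumL2 m E, sumL3 m E, erE (m + 1), erE (m + 2), erE m]
    have hc0 : (n.choose m : ℝ) ≠ 0 :=
      Nat.cast_ne_zero.2 (Nat.choose_pos (by omega)).ne'
    have hc1 : (n.choose (m + 1) : ℝ) ≠ 0 :=
      Nat.cast_ne_zero.2 (Nat.choose_pos (by omega)).ne'
    have hc2 : (n.choose (m + 2) : ℝ) ≠ 0 :=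
      Nat.cast_ne_zero.2 (Nat.choose_pos (by omega)).ne'
    have hch : ((m + 2).choose 2 : ℝ) ≠ 0 :=
      Nat.cast_ne_zero.2 (Nat.choose_pos (by omega)).ne'
    have hid1 : (((m + 1) * (n - (m + 1)) : ℕ) : ℝ) * (n.choose (m + 1) : ℝ)
        = 2 * ((n.choose (m + 2) : ℝ) * ((m + 2).choose 2 : ℝ)) := by
      exact_mod_cast natid1' n m
    have hid3 : (((n - m).choose 2 : ℕ) : ℝ) * (n.choose m : ℝ)
        = (n.choose (m + 2) : ℝ) * ((m + 2).choose 2 : ℝ) := by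
      exact_mod_cast natid3' n m
    set T1 := ∑ a ∈ Fset n (m + 1), E a
    set T2 := ∑ a ∈ Fset n (m + 2), E a
    set T0 := ∑ a ∈ Fset n m, E a
    have e1 : ((n.choose (m + 2) : ℝ) * ((m + 2).choose 2 : ℝ))⁻¹
        * (((m + 1) * (n - (m + 1)) : ℕ) : ℝ) = 2 * (n.choose (m + 1) : ℝ)⁻¹ := by
      push_cast at hid1 ⊢
      field_simp
      linear_combination hid1
    have e2 : ((n.choose (m + 2) : ℝ) * ((m + 2).choose 2 : ℝ))⁻¹
        * (((m + 2).choose 2 : ℕ) : ℝ) = (n.choose (m + 2) : ℝ)⁻¹ := by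
      field_simp
    have e3 : ((n.choose (m + 2) : ℝ) * ((m + 2).choose 2 : ℝ))⁻¹
        * (((n - m).choose 2 : ℕ) : ℝ) = (n.choose m : ℝ)⁻¹ := by
      push_cast at hid3
      field_simp
      linear_combination hid3
    linear_combination T1 * e1 - T2 * e2 - T0 * e3
  -- telescoping sum
  have hIcc : Finset.Icc 1 (n - 1) = Finset.Ico 1 n := by
    rw [← Finset.Ico_add_one_right_eq_Icc]
    congr 1
    omega
  have hsum : ∑ k ∈ Finset.Icc 1 (n - 1), uI μ X k
      = rE μ X 1 + rE μ X (n - 1) - rE μ X n - rE μ X 0 := by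
    rw [hIcc, Finset.sum_Ico_eq_sum_range]
    have hstep : ∀ i ∈ Finset.range (n - 1), uI μ X (1 + i)
        = 2 * rE μ X (i + 1) - rE μ X (i + 2) - rE μ X i := by
      intro i hi
      rw [Nat.add_comm 1 i]
      exact hk i (by have := Finset.mem_range.1 hi; omega)
    rw [Finset.sum_congr rfl hstep]
    have t1 : ∑ i ∈ Finset.range (n - 1), (rE μ X (i + 1) - rE μ X i)
        = rE μ X (n - 1) - rE μ X 0 := Finset.sum_range_sub _ _
    have hn1 : n - 1 + 1 = n := by omega
    have t2 : ∑ i ∈ Finset.range (n - 1), (rE μ X (i + 1 + 1) - rE μ X (i + 1))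
        = rE μ X n - rE μ X 1 := by
      have h := Finset.sum_range_sub (fun i => rE μ X (i + 1)) (n - 1)
      rw [hn1] at h
      exact h
    have expand : ∑ i ∈ Finset.range (n - 1),
          (2 * rE μ X (i + 1) - rE μ X (i + 2) - rE μ X i)
        = (∑ i ∈ Finset.range (n - 1), (rE μ X (i + 1) - rE μ X i))
          - (∑ i ∈ Finset.range (n - 1), (rE μ X (i + 1 + 1) - rE μ X (i + 1))) := by
      rw [← Finset.sum_sub_distrib]
      refine Finset.sum_congr rfl fun i _ => ?_
      have : i + 1 + 1 = i + 2 := rfl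
      rw [this]
      ring
    rw [expand, t1, t2]
    ring
  -- boundary values
  have hF0 : Fset n 0 = {∅} := by
    ext a
    simp [mem_Fset, Finset.card_eq_zero, Finset.mem_singleton]
  have hE0 : E ∅ = 0 := by
    rw [hE]
    unfold ent
    have hpre : ∀ z : ((∅ : Finset (Fin n)) → S), (restr X ∅) ⁻¹' {z} = Set.univ := by
      intro z
      ext ω
      simp only [Set.mem_preimage, Set.mem_singleton_iff, Set.mem_univ, iff_true]
      funext x
      exact absurd x.2 (Finset.notMem_empty _)
    simp [hpre]
  have hrE0 : rE μ X 0 = 0 := by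
    have : rE μ X 0 = ((n.choose 0 : ℝ))⁻¹ * ∑ a ∈ Fset n 0, E a := rfl
    rw [this, hF0, Finset.sum_singleton, hE0, mul_zero]
  have hFn : Fset n n = {Finset.univ} := by
    ext a
    simp only [mem_Fset, Finset.mem_singleton]
    constructor
    · intro h
      apply Finset.eq_univ_of_card
      rw [h, Fintype.card_fin]
    · rintro rfl
      rw [Finset.card_univ, Fintype.card_fin]
  have hrEn : rE μ X n = E Finset.univ := by
    have : rE μ X n = ((n.choose n : ℝ))⁻¹ * ∑ a ∈ Fset n n, E a := rfl
    rw [this, hFn, Finset.sum_singleton, Nat.choose_self]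
    norm_num
  have hF1 : Fset n 1 = Finset.univ.image (fun j : Fin n => ({j} : Finset (Fin n))) := by
    ext a
    simp only [mem_Fset, Finset.card_eq_one, Finset.mem_image, Finset.mem_univ, true_and]
    constructor
    · rintro ⟨j, rfl⟩; exact ⟨j, rfl⟩
    · rintro ⟨j, rfl⟩; exact ⟨j, rfl⟩
  have hT1 : ∑ a ∈ Fset n 1, E a = ∑ j : Fin n, E {j} := by
    rw [hF1, Finset.sum_image (fun a _ b _ h => Finset.singleton_injective h)]
  have hFn1 : Fset n (n - 1)
      = Finset.univ.image (fun j : Fin n => (({j} : Finset (Fin n))ᶜ)) := by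
    ext a
    simp only [mem_Fset, Finset.mem_image, Finset.mem_univ, true_and]
    constructor
    · intro h
      have hcc : (aᶜ).card = 1 := by
        rw [Finset.card_compl, Fintype.card_fin, h]
        omega
      obtain ⟨j, hj⟩ := Finset.card_eq_one.1 hcc
      exact ⟨j, by rw [← hj, compl_compl]⟩
    · rintro ⟨j, rfl⟩
      rw [Finset.card_compl, Fintype.card_fin, Finset.card_singleton]
  have hTn1 : ∑ a ∈ Fset n (n - 1), E a = ∑ j : Fin n, E ({j}ᶜ) := by
    rw [hFn1]
    exact Finset.sum_image fun a _ b _ h =>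
      Finset.singleton_injective (compl_injective h)
  have hrE1 : rE μ X 1 = (n : ℝ)⁻¹ * ∑ j : Fin n, E {j} := by
    have : rE μ X 1 = ((n.choose 1 : ℝ))⁻¹ * ∑ a ∈ Fset n 1, E a := rfl
    rw [this, hT1, Nat.choose_one_right]
  have hrEn1 : rE μ X (n - 1) = (n : ℝ)⁻¹ * ∑ j : Fin n, E ({j}ᶜ) := by
    have h0 : rE μ X (n - 1) = ((n.choose (n - 1) : ℝ))⁻¹ * ∑ a ∈ Fset n (n - 1), E a := rfl
    have hch : n.choose (n - 1) = n := by
      have h := Nat.choose_symm (show n - 1 ≤ n by omega)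
      rw [show n - (n - 1) = 1 by omega] at h
      rw [← h]
      exact Nat.choose_one_right n
    rw [h0, hTn1, hch]
  -- LHS
  have hLHS : ∑ j : Fin n, mi μ (X j) (restr X ({j} : Finset (Fin n))ᶜ)
      = (∑ j : Fin n, E {j}) + (∑ j : Fin n, E ({j}ᶜ)) - (n : ℝ) * E Finset.univ := by
    rw [Finset.sum_congr rfl (fun j _ => mi_expand μ X j)]
    rw [Finset.sum_sub_distrib, Finset.sum_add_distrib, Finset.sum_const, nsmul_eq_mul]
    simp [hE, Finset.card_univ]
  rw [hLHS, hsum, hrE0, hrEn, hrE1, hrEn1]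
  have hnne : (n : ℝ) ≠ 0 := Nat.cast_ne_zero.2 (by omega)
  field_simp
  try ring
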